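/- arXiv:1107.1944 — 3 statements merged into one kernel-verified Lean document; each statement's English description precedes it below -/
import Mathlib

section
/- Let J be an n×n real symmetric positive semidefinite matrix of rank r, written J = U_r Σ U_rᵀ with U_r ∈ ℝ^{n×r} having orthonormal columns and Σ invertible diagonal with positive entries. For any V ∈ ℝ^{n×r} with VᵀV = I_r such that Vᵀ J V is invertible, and for every i, the i-th largest eigenvalue satisfies λ_i(V (Vᵀ J V)⁻¹ Vᵀ) ≥ λ_i(J†), where J† is the Moore-Penrose pseudoinverse of J. -/
open Matrix
section Helpers

variable {n : ℕ}

lemma inner_eq_dot (x y : EuclideanSpace ℝ (Fin n)) :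
    (inner ℝ x y : ℝ) = (x : Fin n → ℝ) ⬝ᵥ y := by
  simp [PiLp.inner_apply, RCLike.inner_apply, dotProduct, mul_comm]

lemma form_expand {A : Matrix (Fin n) (Fin n) ℝ} (hA : A.IsHermitian)
    {ι : Type*} [Fintype ι] (w : OrthonormalBasis ι ℝ (EuclideanSpace ℝ (Fin n)))
    (g : ι → ℝ) (hw : ∀ j, A *ᵥ (w j : Fin n → ℝ) = g j • (w j : Fin n → ℝ))
    (x : EuclideanSpace ℝ (Fin n)) :
    (x : Fin n → ℝ) ⬝ᵥ (A *ᵥ x) = ∑ j, g j * (inner ℝ (w j) x : ℝ)^2 := by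
  have hAt : Aᵀ = A := by
    have := hA; rwa [Matrix.IsHermitian, conjTranspose_eq_transpose_of_trivial] at this
  have key : ∀ j, (inner ℝ (w j) (WithLp.toLp 2 (A *ᵥ x : Fin n → ℝ)) : ℝ)
      = g j * (inner ℝ (w j) x : ℝ) := by
    intro j
    rw [inner_eq_dot, inner_eq_dot]
    calc (w j : Fin n → ℝ) ⬝ᵥ (A *ᵥ x) = ((w j : Fin n → ℝ) ᵥ* A) ⬝ᵥ x := by
          rw [dotProduct_mulVec]
      _ = (A *ᵥ (w j : Fin n → ℝ)) ⬝ᵥ x := by rw [← Matrix.vecMul_transpose, hAt]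
      _ = g j * ((w j : Fin n → ℝ) ⬝ᵥ x) := by rw [hw j, smul_dotProduct]; rfl
  have := w.sum_inner_mul_inner x (WithLp.toLp 2 (A *ᵥ x : Fin n → ℝ))
  rw [inner_eq_dot] at this
  rw [← this]
  congr 1; funext j
  rw [key j, real_inner_comm x (w j)]; ring

lemma coeff_zero_of_mem_span {ι : Type*} [Fintype ι]
    (w : OrthonormalBasis ι ℝ (EuclideanSpace ℝ (Fin n))) (s : Set ι)
    (x : EuclideanSpace ℝ (Fin n)) (hx : x ∈ Submodule.span ℝ (w '' s))
    {j : ι} (hj : j ∉ s) : (inner ℝ (w j) x : ℝ) = 0 := by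
  classical
  have h := Submodule.span_le.mpr (show w '' s ⊆ (LinearMap.ker ((innerSL ℝ (w j)).toLinearMap) : Submodule ℝ (EuclideanSpace ℝ (Fin n))) by
    rintro y ⟨k, hk, rfl⟩
    have h2 := w.orthonormal
    rw [orthonormal_iff_ite] at h2
    simpa [show j ≠ k from fun h => hj (h ▸ hk)] using h2 j k)
  exact h hx

lemma parseval (x : EuclideanSpace ℝ (Fin n))
    {ι : Type*} [Fintype ι] (w : OrthonormalBasis ι ℝ (EuclideanSpace ℝ (Fin n))) :
    (x : Fin n → ℝ) ⬝ᵥ x = ∑ j, (inner ℝ (w j) x : ℝ)^2 := by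
  have h := form_expand (A := (1 : Matrix (Fin n) (Fin n) ℝ)) (isHermitian_one) w
    (fun _ => 1) (fun j => by simp) x
  simpa using h

lemma dmm {m p q : Type*} [Fintype m] [Fintype p] [Fintype q]
    (A : Matrix m p ℝ) (B : Matrix m q ℝ) (y : p → ℝ) (z : q → ℝ) :
    (A *ᵥ y) ⬝ᵥ (B *ᵥ z) = y ⬝ᵥ ((Aᵀ * B) *ᵥ z) := by
  rw [← Matrix.mulVec_mulVec]
  conv_rhs => rw [Matrix.dotProduct_mulVec]
  rw [Matrix.vecMul_transpose]

lemma dot_self_nonneg {m : Type*} [Fintype m] (v : m → ℝ) : 0 ≤ v ⬝ᵥ v :=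
  Finset.sum_nonneg fun i _ => mul_self_nonneg _

lemma contract {r : ℕ} (A : Matrix (Fin n) (Fin r) ℝ) (hA : Aᵀ * A = 1) (y : Fin n → ℝ) :
    (Aᵀ *ᵥ y) ⬝ᵥ (Aᵀ *ᵥ y) ≤ y ⬝ᵥ y := by
  set Q : Matrix (Fin n) (Fin n) ℝ := 1 - A * Aᵀ with hQ
  have hQQ : Qᵀ * Q = Q := by
    rw [hQ]
    have : (1 - A * Aᵀ)ᵀ = 1 - A * Aᵀ := by
      simp [transpose_sub, transpose_mul]
    rw [this]
    rw [Matrix.sub_mul, Matrix.mul_sub, Matrix.mul_sub]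
    simp only [Matrix.one_mul, Matrix.mul_one]
    have : A * Aᵀ * (A * Aᵀ) = A * Aᵀ := by
      rw [Matrix.mul_assoc, ← Matrix.mul_assoc Aᵀ, hA, Matrix.one_mul]
    rw [this]; abel
  have key : (Aᵀ *ᵥ y) ⬝ᵥ (Aᵀ *ᵥ y) = y ⬝ᵥ ((A * Aᵀ) *ᵥ y) := by
    rw [dmm]; simp
  have key2 : (Q *ᵥ y) ⬝ᵥ (Q *ᵥ y) = y ⬝ᵥ (Q *ᵥ y) := by
    rw [dmm, hQQ]
  have h0 := dot_self_nonneg (Q *ᵥ y)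
  rw [key2, hQ, Matrix.sub_mulVec, dotProduct_sub, Matrix.one_mulVec] at h0
  rw [key]; linarith

lemma isometry_dot {r : ℕ} (A : Matrix (Fin n) (Fin r) ℝ) (hA : Aᵀ * A = 1) (y : Fin r → ℝ) :
    (A *ᵥ y) ⬝ᵥ (A *ᵥ y) = y ⬝ᵥ y := by
  rw [dmm, hA, Matrix.one_mulVec]

end Helpers

/-- The four Penrose conditions characterizing the Moore-Penrose pseudoinverse
(over ℝ, conjugate transpose = transpose). -/
def IsMoorePenrose {n : ℕ} (A B : Matrix (Fin n) (Fin n) ℝ) : Prop :=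
  A * B * A = A ∧ B * A * B = B ∧ (A * B)ᵀ = A * B ∧ (B * A)ᵀ = B * A

/-- `eigDesc hA i` is the `i`-th largest eigenvalue (counted with multiplicity)
of the symmetric real matrix `A`. -/
noncomputable def eigDesc {n : ℕ} {A : Matrix (Fin n) (Fin n) ℝ}
    (hA : A.IsHermitian) (i : Fin n) : ℝ :=
  hA.eigenvalues (Tuple.sort hA.eigenvalues i.rev)

lemma mp_unique {n : ℕ} {A B C : Matrix (Fin n) (Fin n) ℝ}
    (hB : IsMoorePenrose A B) (hC : IsMoorePenrose A C) : B = C := by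
  obtain ⟨hB1, hB2, hB3, hB4⟩ := hB
  obtain ⟨hC1, hC2, hC3, hC4⟩ := hC
  have e2 : Aᵀ = Aᵀ * Cᵀ * Aᵀ := by
    have := congrArg Matrix.transpose hC1
    simp only [transpose_mul] at this
    rw [Matrix.mul_assoc]; exact this.symm
  have hAB : A * B = A * C := by
    calc A * B = Bᵀ * Aᵀ := by rw [← transpose_mul, hB3]
      _ = Bᵀ * (Aᵀ * Cᵀ * Aᵀ) := by rw [← e2]
      _ = (Bᵀ * Aᵀ) * (Cᵀ * Aᵀ) := by simp [Matrix.mul_assoc]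
      _ = (A * B)ᵀ * (A * C)ᵀ := by rw [← transpose_mul, ← transpose_mul]
      _ = (A * B) * (A * C) := by rw [hB3, hC3]
      _ = (A * B * A) * C := by simp [Matrix.mul_assoc]
      _ = A * C := by rw [hB1]
  have hBA : B * A = C * A := by
    calc B * A = Aᵀ * Bᵀ := by rw [← transpose_mul, hB4]
      _ = (Aᵀ * Cᵀ * Aᵀ) * Bᵀ := by rw [← e2]
      _ = (Aᵀ * Cᵀ) * (Aᵀ * Bᵀ) := by simp [Matrix.mul_assoc]
      _ = (C * A)ᵀ * (B * A)ᵀ := by rw [← transpose_mul, ← transpose_mul]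
      _ = (C * A) * (B * A) := by rw [hB4, hC4]
      _ = C * (A * B * A) := by simp [Matrix.mul_assoc]
      _ = C * A := by rw [hB1]
  calc B = B * A * B := hB2.symm
    _ = C * A * B := by rw [hBA]
    _ = C * (A * B) := by rw [Matrix.mul_assoc]
    _ = C * (A * C) := by rw [hAB]
    _ = C * A * C := by rw [Matrix.mul_assoc]
    _ = C := hC2

lemma cf_lower {n : ℕ} {A : Matrix (Fin n) (Fin n) ℝ} (hA : A.IsHermitian) (i : Fin n) (μ : ℝ)
    (E : Submodule ℝ (EuclideanSpace ℝ (Fin n)))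
    (hdim : i.val + 1 ≤ Module.finrank ℝ E)
    (hform : ∀ x ∈ E, μ * ((x : Fin n → ℝ) ⬝ᵥ x) ≤ (x : Fin n → ℝ) ⬝ᵥ (A *ᵥ x)) :
    μ ≤ eigDesc hA i := by
  classical
  set σ := Tuple.sort hA.eigenvalues with hσ
  set w := hA.eigenvectorBasis.reindex σ.symm with hwdef
  have hwap : ∀ j, w j = hA.eigenvectorBasis (σ j) := fun j => by
    rw [hwdef, OrthonormalBasis.reindex_apply]; simp
  set g : Fin n → ℝ := fun j => hA.eigenvalues (σ j) with hg
  have hgmono : Monotone g := Tuple.monotone_sort hA.eigenvalues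
  have hw : ∀ j, A *ᵥ (w j : Fin n → ℝ) = g j • (w j : Fin n → ℝ) := by
    intro j; rw [hwap j]; exact hA.mulVec_eigenvectorBasis (σ j)
  set F := Submodule.span ℝ (w '' Set.Iic i.rev) with hF
  have hFdim : Module.finrank ℝ F = n - i.val := by
    have li : LinearIndependent ℝ (fun j : ↥(Set.Iic i.rev) => w (j : Fin n)) :=
      (w.orthonormal.linearIndependent).comp Subtype.val Subtype.val_injective
    rw [hF, Set.image_eq_range, finrank_span_eq_card li, ← Set.toFinset_card, Set.toFinset_Iic, Fin.card_Iic]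
    simp only [Fin.val_rev]
    omega
  have hEF : 1 ≤ Module.finrank ℝ ↥(E ⊓ F) := by
    have h1 := Submodule.finrank_sup_add_finrank_inf_eq E F
    have h2 : Module.finrank ℝ ↥(E ⊔ F) ≤ n := by
      have := Submodule.finrank_le (E ⊔ F)
      rwa [finrank_euclideanSpace_fin] at this
    have h3 := i.isLt
    omega
  obtain ⟨x, hxmem, hxne⟩ : ∃ x : EuclideanSpace ℝ (Fin n), x ∈ E ⊓ F ∧ x ≠ 0 := by
    obtain ⟨y, hy⟩ := Module.finrank_pos_iff_exists_ne_zero.mp hEF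
    exact ⟨y.val, y.2, fun h => hy (Subtype.ext h)⟩
  obtain ⟨hxE, hxF⟩ := hxmem
  have hxx : (0:ℝ) < (x : Fin n → ℝ) ⬝ᵥ x := by
    rw [← inner_eq_dot]
    have h0 : (inner ℝ x x : ℝ) ≠ 0 := fun h => hxne (inner_self_eq_zero.mp h)
    exact lt_of_le_of_ne real_inner_self_nonneg (Ne.symm h0)
  have hup : (x : Fin n → ℝ) ⬝ᵥ (A *ᵥ x) ≤ g i.rev * ((x : Fin n → ℝ) ⬝ᵥ x) := by
    rw [form_expand hA w g hw x, parseval x w, Finset.mul_sum]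
    apply Finset.sum_le_sum
    intro j _
    by_cases hj : j ∈ Set.Iic i.rev
    · have : g j ≤ g i.rev := hgmono hj
      nlinarith [sq_nonneg (inner ℝ (w j) x : ℝ)]
    · rw [coeff_zero_of_mem_span w _ x hxF hj]; simp
  have := le_trans (hform x hxE) hup
  have hged : eigDesc hA i = g i.rev := rfl
  rw [hged]
  exact le_of_mul_le_mul_right (by linarith) hxx

lemma cf_upper {n : ℕ} {A : Matrix (Fin n) (Fin n) ℝ} (hA : A.IsHermitian) (i : Fin n) (μ : ℝ)
    (E : Submodule ℝ (EuclideanSpace ℝ (Fin n)))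
    (hdim : n - i.val ≤ Module.finrank ℝ E)
    (hform : ∀ x ∈ E, (x : Fin n → ℝ) ⬝ᵥ (A *ᵥ x) ≤ μ * ((x : Fin n → ℝ) ⬝ᵥ x)) :
    eigDesc hA i ≤ μ := by
  classical
  set σ := Tuple.sort hA.eigenvalues with hσ
  set w := hA.eigenvectorBasis.reindex σ.symm with hwdef
  have hwap : ∀ j, w j = hA.eigenvectorBasis (σ j) := fun j => by
    rw [hwdef, OrthonormalBasis.reindex_apply]; simp
  set g : Fin n → ℝ := fun j => hA.eigenvalues (σ j) with hg
  have hgmono : Monotone g := Tuple.monotone_sort hA.eigenvalues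
  have hw : ∀ j, A *ᵥ (w j : Fin n → ℝ) = g j • (w j : Fin n → ℝ) := by
    intro j; rw [hwap j]; exact hA.mulVec_eigenvectorBasis (σ j)
  set F := Submodule.span ℝ (w '' Set.Ici i.rev) with hF
  have hFdim : Module.finrank ℝ F = i.val + 1 := by
    have li : LinearIndependent ℝ (fun j : ↥(Set.Ici i.rev) => w (j : Fin n)) :=
      (w.orthonormal.linearIndependent).comp Subtype.val Subtype.val_injective
    rw [hF, Set.image_eq_range, finrank_span_eq_card li, ← Set.toFinset_card, Set.toFinset_Ici, Fin.card_Ici]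
    simp only [Fin.val_rev]
    have := i.isLt
    omega
  have hEF : 1 ≤ Module.finrank ℝ ↥(E ⊓ F) := by
    have h1 := Submodule.finrank_sup_add_finrank_inf_eq E F
    have h2 : Module.finrank ℝ ↥(E ⊔ F) ≤ n := by
      have := Submodule.finrank_le (E ⊔ F)
      rwa [finrank_euclideanSpace_fin] at this
    have h3 := i.isLt
    omega
  obtain ⟨x, hxmem, hxne⟩ : ∃ x : EuclideanSpace ℝ (Fin n), x ∈ E ⊓ F ∧ x ≠ 0 := by
    obtain ⟨y, hy⟩ := Module.finrank_pos_iff_exists_ne_zero.mp hEF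
    exact ⟨y.val, y.2, fun h => hy (Subtype.ext h)⟩
  obtain ⟨hxE, hxF⟩ := hxmem
  have hxx : (0:ℝ) < (x : Fin n → ℝ) ⬝ᵥ x := by
    rw [← inner_eq_dot]
    have h0 : (inner ℝ x x : ℝ) ≠ 0 := fun h => hxne (inner_self_eq_zero.mp h)
    exact lt_of_le_of_ne real_inner_self_nonneg (Ne.symm h0)
  have hup : g i.rev * ((x : Fin n → ℝ) ⬝ᵥ x) ≤ (x : Fin n → ℝ) ⬝ᵥ (A *ᵥ x) := by
    rw [form_expand hA w g hw x, parseval x w, Finset.mul_sum]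
    apply Finset.sum_le_sum
    intro j _
    by_cases hj : j ∈ Set.Ici i.rev
    · have : g i.rev ≤ g j := hgmono hj
      nlinarith [sq_nonneg (inner ℝ (w j) x : ℝ)]
    · rw [coeff_zero_of_mem_span w _ x hxF hj]; simp
  have := le_trans hup (hform x hxE)
  have hged : eigDesc hA i = g i.rev := rfl
  rw [hged]
  exact le_of_mul_le_mul_right (by linarith) hxx

set_option maxHeartbeats 2000000 in
theorem stmt6 {n r : ℕ} (hrn : r ≤ n)
    (J : Matrix (Fin n) (Fin n) ℝ) (hJ : J.PosSemidef) (hrank : J.rank = r)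
    (U : Matrix (Fin n) (Fin r) ℝ) (S : Matrix (Fin r) (Fin r) ℝ)
    (d : Fin r → ℝ) (hd : ∀ i, 0 < d i) (hS : S = Matrix.diagonal d)
    (hU : Uᵀ * U = 1) (hdecomp : J = U * S * Uᵀ)
    (V : Matrix (Fin n) (Fin r) ℝ) (hV : Vᵀ * V = 1)
    (hdet : IsUnit (Vᵀ * J * V).det)
    (hM : (V * (Vᵀ * J * V)⁻¹ * Vᵀ).IsHermitian)
    (K : Matrix (Fin n) (Fin n) ℝ) (hKmp : IsMoorePenrose J K)
    (hK : K.IsHermitian) :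
    ∀ i : Fin n, eigDesc hK i ≤ eigDesc hM i := by
  classical
  intro i
  -- basic invertibility facts for S
  have hdne : ∀ j, d j ≠ 0 := fun j => (hd j).ne'
  have hSdet : IsUnit S.det := by
    rw [hS, det_diagonal]
    exact isUnit_iff_ne_zero.mpr (Finset.prod_ne_zero_iff.mpr fun j _ => hdne j)
  have hSinv : S⁻¹ = Matrix.diagonal (fun j => (d j)⁻¹) := by
    apply Matrix.inv_eq_right_inv
    rw [hS, Matrix.diagonal_mul_diagonal]
    convert Matrix.diagonal_one with j
    exact mul_inv_cancel₀ (hdne j)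
  have hSS : S * S⁻¹ = 1 := Matrix.mul_nonsing_inv S hSdet
  have hSS' : S⁻¹ * S = 1 := Matrix.nonsing_inv_mul S hSdet
  have hSt : Sᵀ = S := by rw [hS]; exact Matrix.diagonal_transpose d
  -- cancellation helpers
  have hUc : ∀ (p : ℕ) (X : Matrix (Fin r) (Fin p) ℝ), Uᵀ * (U * X) = X := fun p X => by
    rw [← Matrix.mul_assoc, hU, Matrix.one_mul]
  have hVc : ∀ (p : ℕ) (X : Matrix (Fin r) (Fin p) ℝ), Vᵀ * (V * X) = X := fun p X => by
    rw [← Matrix.mul_assoc, hV, Matrix.one_mul]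
  have hSc : ∀ (p : ℕ) (X : Matrix (Fin r) (Fin p) ℝ), S * (S⁻¹ * X) = X := fun p X => by
    rw [← Matrix.mul_assoc, hSS, Matrix.one_mul]
  have hSc' : ∀ (p : ℕ) (X : Matrix (Fin r) (Fin p) ℝ), S⁻¹ * (S * X) = X := fun p X => by
    rw [← Matrix.mul_assoc, hSS', Matrix.one_mul]
  -- identify K
  have hJK : J * (U * S⁻¹ * Uᵀ) = U * Uᵀ := by
    rw [hdecomp]; simp only [Matrix.mul_assoc, hUc, hSc]
  have hKJ : (U * S⁻¹ * Uᵀ) * J = U * Uᵀ := by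
    rw [hdecomp]; simp only [Matrix.mul_assoc, hUc, hSc']
  have hKeq : K = U * S⁻¹ * Uᵀ := by
    refine mp_unique hKmp ⟨?_, ?_, ?_, ?_⟩
    · rw [hJK]
      conv_rhs => rw [hdecomp]
      conv_lhs => rw [hdecomp]
      simp only [Matrix.mul_assoc, hUc]
    · rw [Matrix.mul_assoc, hJK]
      simp only [Matrix.mul_assoc, hUc]
    · rw [hJK]; simp [transpose_mul]
    · rw [hKJ]; simp [transpose_mul]
  -- W and its invertibility
  set W := Uᵀ * V with hW
  have hBW : Vᵀ * J * V = Wᵀ * S * W := by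
    rw [hdecomp, hW]
    simp only [transpose_mul, transpose_transpose, Matrix.mul_assoc]
  have hdetW : IsUnit W.det := by
    have h := hdet
    rw [hBW, Matrix.det_mul, Matrix.det_mul, Matrix.det_transpose] at h
    exact (IsUnit.mul_iff.mp h).2
  have hdetWt : IsUnit Wᵀ.det := by rwa [Matrix.det_transpose]
  set B := Vᵀ * J * V with hBdef
  set M := V * B⁻¹ * Vᵀ with hMdef
  have hBB : B⁻¹ * B = 1 := Matrix.nonsing_inv_mul B hdet
  have hBB' : B * B⁻¹ = 1 := Matrix.mul_nonsing_inv B hdet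
  -- B⁻¹ via W
  have hWc : ∀ (p : ℕ) (X : Matrix (Fin r) (Fin p) ℝ), W * (W⁻¹ * X) = X := fun p X => by
    rw [← Matrix.mul_assoc, Matrix.mul_nonsing_inv W hdetW, Matrix.one_mul]
  have hWtc : ∀ (p : ℕ) (X : Matrix (Fin r) (Fin p) ℝ), (Wᵀ)⁻¹ * (Wᵀ * X) = X := fun p X => by
    rw [← Matrix.mul_assoc, Matrix.nonsing_inv_mul Wᵀ hdetWt, Matrix.one_mul]
  have hBinv : B⁻¹ = W⁻¹ * S⁻¹ * (Wᵀ)⁻¹ := by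
    apply Matrix.inv_eq_right_inv
    show B * (W⁻¹ * S⁻¹ * Wᵀ⁻¹) = 1
    rw [hBW]
    simp only [Matrix.mul_assoc, hWc, hSc]
    exact Matrix.mul_nonsing_inv Wᵀ hdetWt
  -- sorted d
  set σd := Tuple.sort d with hσd
  have hemono : Monotone (fun t => d (σd t)) := Tuple.monotone_sort d
  -- M PSD
  have hJt : Jᵀ = J := by
    have := hJ.1; rwa [Matrix.IsHermitian, conjTranspose_eq_transpose_of_trivial] at this
  have hBt : Bᵀ = B := by
    rw [hBdef]; simp only [transpose_mul, transpose_transpose, hJt]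
    simp [Matrix.mul_assoc]
  have hMpsd : M.PosSemidef := by
    have hBps : B.PosSemidef := by
      have h := hJ.conjTranspose_mul_mul_same V
      rwa [conjTranspose_eq_transpose_of_trivial] at h
    have hkey : M = (V * B⁻¹) * B * (V * B⁻¹)ᴴ := by
      rw [conjTranspose_eq_transpose_of_trivial, transpose_mul, Matrix.transpose_nonsing_inv, hBt]
      rw [hMdef]
      simp only [Matrix.mul_assoc]
      congr 1
      rw [← Matrix.mul_assoc B⁻¹ B, hBB, Matrix.one_mul]
    rw [hkey]
    exact hBps.mul_mul_conjTranspose_same _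
  by_cases hir : i.val < r
  · set k : Fin r := ⟨i.val, hir⟩ with hk
    set μ : ℝ := (d (σd k))⁻¹ with hμ
    have hek : 0 < d (σd k) := hd _
    have hμpos : 0 < μ := inv_pos.mpr hek
    have hupper : eigDesc hK i ≤ μ := by
      let L2 : EuclideanSpace ℝ (Fin n) →ₗ[ℝ] (Fin i.val → ℝ) :=
        { toFun := fun x => fun t => (Uᵀ *ᵥ (x : Fin n → ℝ)) (σd (Fin.castLE hir.le t))
          map_add' := fun x y => by
            funext t
            show (Uᵀ *ᵥ ((x : Fin n → ℝ) + (y : Fin n → ℝ))) _ = _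
            rw [Matrix.mulVec_add]; rfl
          map_smul' := fun a x => by
            funext t
            show (Uᵀ *ᵥ (a • (x : Fin n → ℝ))) _ = _
            rw [Matrix.mulVec_smul]; rfl }
      apply cf_upper hK i μ (LinearMap.ker L2)
      · have h1 := LinearMap.finrank_range_add_finrank_ker L2
        rw [finrank_euclideanSpace_fin] at h1
        have h2 : Module.finrank ℝ (LinearMap.range L2) ≤ i.val := by
          have := Submodule.finrank_le (LinearMap.range L2)
          rwa [Module.finrank_fin_fun] at this
        omega
      · intro x hx
        set cx := Uᵀ *ᵥ (x : Fin n → ℝ) with hcx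
        have hxk : ∀ t : Fin i.val, cx (σd (Fin.castLE hir.le t)) = 0 := by
          intro t
          exact congrFun (LinearMap.mem_ker.mp hx) t
        have hsupp : ∀ j : Fin r, (σd.symm j).val < i.val → cx j = 0 := by
          intro j hj
          have h := hxk ⟨(σd.symm j).val, hj⟩
          have he : Fin.castLE hir.le (⟨(σd.symm j).val, hj⟩ : Fin i.val) = σd.symm j := by
            apply Fin.ext; rfl
          rw [he, Equiv.apply_symm_apply] at h
          exact h
        have hKx : (x : Fin n → ℝ) ⬝ᵥ (K *ᵥ (x : Fin n → ℝ)) = cx ⬝ᵥ (S⁻¹ *ᵥ cx) := by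
          rw [hKeq, ← Matrix.mulVec_mulVec, ← Matrix.mulVec_mulVec]
          rw [Matrix.dotProduct_mulVec ((x : Fin n → ℝ)) U, ← Matrix.mulVec_transpose]
        have expand : cx ⬝ᵥ (S⁻¹ *ᵥ cx) = ∑ j, (d j)⁻¹ * (cx j * cx j) := by
          rw [hSinv]
          simp only [dotProduct, Matrix.mulVec_diagonal]
          apply Finset.sum_congr rfl
          intro j _
          ring
        have hterm : cx ⬝ᵥ (S⁻¹ *ᵥ cx) ≤ μ * (cx ⬝ᵥ cx) := by
          rw [expand, dotProduct, Finset.mul_sum]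
          apply Finset.sum_le_sum
          intro j _
          by_cases hcj : cx j = 0
          · simp [hcj]
          · have hge : i.val ≤ (σd.symm j).val := not_lt.mp (fun h => hcj (hsupp j h))
            have hdj : d (σd k) ≤ d j := by
              have h := hemono (show k ≤ σd.symm j from by rw [Fin.le_def]; exact hge)
              simpa using h
            have hinv : (d j)⁻¹ ≤ μ := by
              rw [hμ]; exact inv_anti₀ hek hdj
            nlinarith [mul_self_nonneg (cx j)]
        have hcc : cx ⬝ᵥ cx ≤ (x : Fin n → ℝ) ⬝ᵥ x := contract U hU (x : Fin n → ℝ)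
        rw [hKx]
        calc cx ⬝ᵥ (S⁻¹ *ᵥ cx) ≤ μ * (cx ⬝ᵥ cx) := hterm
          _ ≤ μ * ((x : Fin n → ℝ) ⬝ᵥ x) := mul_le_mul_of_nonneg_left hcc hμpos.le
    have hlower : μ ≤ eigDesc hM i := by
      set Q : Matrix (Fin n) (Fin r) ℝ := V * Wᵀ * S with hQ
      have hRQ : (S⁻¹ * (Wᵀ)⁻¹ * Vᵀ) * Q = 1 := by
        rw [hQ]
        simp only [Matrix.mul_assoc, hVc, hWtc]
        exact hSS'
      have HQ : Qᵀ * (M * Q) = S := by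
        rw [hQ, hMdef]
        simp only [transpose_mul, transpose_transpose, hSt, hBinv, Matrix.mul_assoc,
          hVc, hWc, hWtc, hSc]
      let T : (Fin r → ℝ) →ₗ[ℝ] EuclideanSpace ℝ (Fin n) :=
        { toFun := fun g => WithLp.toLp 2 (Q *ᵥ g : Fin n → ℝ)
          map_add' := fun g g' => by
            show WithLp.toLp 2 (Q *ᵥ (g + g')) = WithLp.toLp 2 (Q *ᵥ g) + WithLp.toLp 2 (Q *ᵥ g')
            rw [Matrix.mulVec_add]; rfl
          map_smul' := fun a g => by
            show WithLp.toLp 2 (Q *ᵥ (a • g)) = a • WithLp.toLp 2 (Q *ᵥ g)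
            rw [Matrix.mulVec_smul]; rfl }
      have hTinj : Function.Injective T := by
        intro a b hab
        have h : Q *ᵥ a = Q *ᵥ b := congrArg WithLp.ofLp hab
        have ha : a = (S⁻¹ * (Wᵀ)⁻¹ * Vᵀ) *ᵥ (Q *ᵥ a) := by
          rw [Matrix.mulVec_mulVec, hRQ, Matrix.one_mulVec]
        have hb : b = (S⁻¹ * (Wᵀ)⁻¹ * Vᵀ) *ᵥ (Q *ᵥ b) := by
          rw [Matrix.mulVec_mulVec, hRQ, Matrix.one_mulVec]
        rw [ha, hb, h]
      set m2 := r - (i.val + 1) with hm2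
      let LG : (Fin r → ℝ) →ₗ[ℝ] (Fin m2 → ℝ) :=
        { toFun := fun g => fun u => g (σd ⟨i.val + 1 + u.val, by have := u.isLt; omega⟩)
          map_add' := fun g g' => rfl
          map_smul' := fun a g => rfl }
      set G := LinearMap.ker LG with hGdef
      set E := Submodule.map T G with hEdef
      have hdimG : i.val + 1 ≤ Module.finrank ℝ G := by
        have h1 := LinearMap.finrank_range_add_finrank_ker LG
        rw [Module.finrank_fin_fun] at h1
        have h2 : Module.finrank ℝ (LinearMap.range LG) ≤ m2 := by
          have := Submodule.finrank_le (LinearMap.range LG)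
          rwa [Module.finrank_fin_fun] at this
        have hGr : Module.finrank ℝ G = Module.finrank ℝ (LinearMap.ker LG) := by rw [hGdef]
        have hm2' : m2 = r - (i.val + 1) := hm2
        have h3 : i.val < r := hir
        omega
      have hdimE : Module.finrank ℝ E = Module.finrank ℝ G :=
        ((Submodule.equivMapOfInjective T hTinj G).finrank_eq).symm
      apply cf_lower hM i μ E (by rw [hdimE]; exact hdimG)
      intro x hx
      obtain ⟨g, hgG, hgx⟩ := Submodule.mem_map.mp hx
      have hxf : (x : Fin n → ℝ) = Q *ᵥ g := by rw [← hgx]; rfl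
      have hsupp : ∀ j : Fin r, i.val + 1 ≤ (σd.symm j).val → g j = 0 := by
        intro j hj
        have hu : (σd.symm j).val - (i.val + 1) < m2 := by
          rw [hm2]
          have := (σd.symm j).isLt; omega
        have h := congrFun (LinearMap.mem_ker.mp hgG) ⟨(σd.symm j).val - (i.val + 1), hu⟩
        have he : σd.symm j = (⟨i.val + 1 + ((σd.symm j).val - (i.val + 1)),
            by have := (σd.symm j).isLt; omega⟩ : Fin r) :=
          Fin.ext (show (σd.symm j).val = i.val + 1 + ((σd.symm j).val - (i.val + 1)) by omega)
        have h2 : g (σd (σd.symm j)) = 0 := by rw [he]; exact h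
        rwa [Equiv.apply_symm_apply] at h2
      have hform1 : (x : Fin n → ℝ) ⬝ᵥ (M *ᵥ (x : Fin n → ℝ)) = g ⬝ᵥ (S *ᵥ g) := by
        rw [hxf, Matrix.mulVec_mulVec, dmm, HQ]
      have hxx : (x : Fin n → ℝ) ⬝ᵥ x ≤ (S *ᵥ g) ⬝ᵥ (S *ᵥ g) := by
        have e1 : (Q *ᵥ g : Fin n → ℝ) = V *ᵥ ((Wᵀ * S) *ᵥ g) := by
          rw [Matrix.mulVec_mulVec]
          congr 1
          rw [hQ, Matrix.mul_assoc]
        have e2 : (Wᵀ * S) *ᵥ g = Vᵀ *ᵥ ((U * S) *ᵥ g) := by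
          rw [Matrix.mulVec_mulVec]
          congr 1
          rw [hW]
          simp [transpose_mul, Matrix.mul_assoc]
        have e3 : (U * S) *ᵥ g = U *ᵥ (S *ᵥ g) := (Matrix.mulVec_mulVec _ _ _).symm
        rw [hxf, e1, isometry_dot V hV, e2]
        calc (Vᵀ *ᵥ ((U * S) *ᵥ g)) ⬝ᵥ (Vᵀ *ᵥ ((U * S) *ᵥ g))
            ≤ ((U * S) *ᵥ g) ⬝ᵥ ((U * S) *ᵥ g) := contract V hV _
          _ = (S *ᵥ g) ⬝ᵥ (S *ᵥ g) := by rw [e3, isometry_dot U hU]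
      have hSgexp : g ⬝ᵥ (S *ᵥ g) = ∑ j, d j * (g j * g j) := by
        rw [hS]
        simp only [dotProduct, Matrix.mulVec_diagonal]
        apply Finset.sum_congr rfl
        intro j _
        ring
      have hSg2 : (S *ᵥ g) ⬝ᵥ (S *ᵥ g) = ∑ j, (d j * g j) * (d j * g j) := by
        rw [hS]
        simp only [dotProduct, Matrix.mulVec_diagonal]
      have hbound : μ * ((S *ᵥ g) ⬝ᵥ (S *ᵥ g)) ≤ g ⬝ᵥ (S *ᵥ g) := by
        rw [hSg2, hSgexp, Finset.mul_sum]
        apply Finset.sum_le_sum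
        intro j _
        by_cases hgj : g j = 0
        · simp [hgj]
        · have hle : (σd.symm j).val ≤ i.val := by
            by_contra hcon
            exact hgj (hsupp j (by omega))
          have hdj : d j ≤ d (σd k) := by
            have h := hemono (show σd.symm j ≤ k from by rw [Fin.le_def]; exact hle)
            simpa using h
          have hμd : μ * d j ≤ 1 := by
            rw [hμ]
            calc (d (σd k))⁻¹ * d j ≤ (d (σd k))⁻¹ * d (σd k) :=
                  mul_le_mul_of_nonneg_left hdj (inv_pos.mpr hek).le
              _ = 1 := inv_mul_cancel₀ hek.ne'
          nlinarith [hμd, mul_nonneg (hd j).le (mul_self_nonneg (g j))]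
      calc μ * ((x : Fin n → ℝ) ⬝ᵥ x) ≤ μ * ((S *ᵥ g) ⬝ᵥ (S *ᵥ g)) :=
            mul_le_mul_of_nonneg_left hxx hμpos.le
        _ ≤ g ⬝ᵥ (S *ᵥ g) := hbound
        _ = (x : Fin n → ℝ) ⬝ᵥ (M *ᵥ (x : Fin n → ℝ)) := hform1.symm
    exact le_trans hupper hlower
  · have hupper : eigDesc hK i ≤ 0 := by
      let L2 : EuclideanSpace ℝ (Fin n) →ₗ[ℝ] (Fin r → ℝ) :=
        { toFun := fun x => Uᵀ *ᵥ (x : Fin n → ℝ)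
          map_add' := fun x y => Matrix.mulVec_add _ _ _
          map_smul' := fun a x => by
            show Uᵀ *ᵥ (a • (x : Fin n → ℝ)) = a • (Uᵀ *ᵥ (x : Fin n → ℝ))
            exact Matrix.mulVec_smul _ _ _ }
      apply cf_upper hK i 0 (LinearMap.ker L2)
      · have h1 := LinearMap.finrank_range_add_finrank_ker L2
        rw [finrank_euclideanSpace_fin] at h1
        have h2 : Module.finrank ℝ (LinearMap.range L2) ≤ r := by
          have := Submodule.finrank_le (LinearMap.range L2)
          rwa [Module.finrank_fin_fun] at this
        have h3 : r ≤ i.val := not_lt.mp hir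
        omega
      · intro x hx
        have hx0 : Uᵀ *ᵥ (x : Fin n → ℝ) = 0 := LinearMap.mem_ker.mp hx
        rw [hKeq, ← Matrix.mulVec_mulVec, ← Matrix.mulVec_mulVec, hx0]
        simp
    have hlower : (0:ℝ) ≤ eigDesc hM i := by
      apply cf_lower hM i 0 ⊤
      · rw [finrank_top, finrank_euclideanSpace_fin]; exact i.isLt
      · intro x _
        have h := hMpsd.dotProduct_mulVec_nonneg (x : Fin n → ℝ)
        simpa using h
    exact le_trans hupper hlower
end

section
/- Let J be an n×n real symmetric PSD matrix of rank r and V ∈ ℝ^{n×r} with orthonormal columns such that Vᵀ J V is invertible. Then trace(V (Vᵀ J V)⁻¹ Vᵀ) ≥ trace(J†), where J† is the Moore-Penrose pseudoinverse of J. -/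
open Matrix
open scoped MatrixOrder

private lemma trace_nonneg_of_psd {m : ℕ} {A : Matrix (Fin m) (Fin m) ℝ}
    (h : A.PosSemidef) : 0 ≤ A.trace := by
  rw [Matrix.trace]
  refine Finset.sum_nonneg fun i _ => ?_
  exact h.diag_nonneg

private lemma mulVec_ext {m k : ℕ} {A B : Matrix (Fin m) (Fin k) ℝ}
    (h : ∀ x, A *ᵥ x = B *ᵥ x) : A = B := by
  ext i j
  have := congrFun (h (Pi.single j 1)) i
  simpa [Matrix.mulVec_single] using this

theorem stmt7 {n r : ℕ}
    (J : Matrix (Fin n) (Fin n) ℝ) (hJ : J.PosSemidef) (hrank : J.rank = r)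
    (V : Matrix (Fin n) (Fin r) ℝ) (hV : Vᵀ * V = 1)
    (hdet : IsUnit (Vᵀ * J * V).det)
    (K : Matrix (Fin n) (Fin n) ℝ) (hKmp : IsMoorePenrose J K) :
    K.trace ≤ (V * (Vᵀ * J * V)⁻¹ * Vᵀ).trace := by
  obtain ⟨h1, h2, h3, h4⟩ := hKmp
  have hJt : Jᵀ = J := hJ.1
  -- K is symmetric, by the uniqueness argument for the Moore-Penrose inverse
  have hC1 : J * Kᵀ * J = J := by
    have := congrArg Matrix.transpose h1
    simpa [Matrix.transpose_mul, hJt, Matrix.mul_assoc] using this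
  have hC2 : Kᵀ * J * Kᵀ = Kᵀ := by
    have := congrArg Matrix.transpose h2
    simpa [Matrix.transpose_mul, hJt, Matrix.mul_assoc] using this
  have hC3 : J * Kᵀ = K * J := by
    calc J * Kᵀ = Jᵀ * Kᵀ := by rw [hJt]
    _ = (K * J)ᵀ := by rw [Matrix.transpose_mul]
    _ = K * J := h4
  have hC4 : Kᵀ * J = J * K := by
    calc Kᵀ * J = Kᵀ * Jᵀ := by rw [hJt]
    _ = (J * K)ᵀ := by rw [Matrix.transpose_mul]
    _ = J * K := h3
  have hJK : J * K = J * Kᵀ := by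
    calc J * K = (J * K)ᵀ := h3.symm
    _ = Kᵀ * Jᵀ := by rw [Matrix.transpose_mul]
    _ = Kᵀ * J := by rw [hJt]
    _ = Kᵀ * (J * K * J) := by rw [h1]
    _ = (Kᵀ * J) * (K * J) := by simp only [Matrix.mul_assoc]
    _ = (Kᵀ * J) * (J * Kᵀ) := by rw [hC3]
    _ = (J * K) * (J * Kᵀ) := by rw [hC4]
    _ = (J * K * J) * Kᵀ := by simp only [Matrix.mul_assoc]
    _ = J * Kᵀ := by rw [h1]
  have hKJ : K * J = Kᵀ * J := by
    calc K * J = J * Kᵀ := hC3.symm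
    _ = J * K := hJK.symm
    _ = Kᵀ * J := hC4.symm
  have hKt : Kᵀ = K := by
    calc Kᵀ = Kᵀ * J * Kᵀ := hC2.symm
    _ = Kᵀ * (J * Kᵀ) := by rw [Matrix.mul_assoc]
    _ = Kᵀ * (J * K) := by rw [← hJK]
    _ = (Kᵀ * J) * K := by rw [Matrix.mul_assoc]
    _ = (K * J) * K := by rw [← hKJ]
    _ = K := h2
  -- notation
  set M := Vᵀ * J * V with hM
  have hMt : Mᵀ = M := by
    rw [hM, Matrix.transpose_mul, Matrix.transpose_mul, hJt, Matrix.transpose_transpose,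
      Matrix.mul_assoc]
  have hMinvt : (M⁻¹)ᵀ = M⁻¹ := by rw [Matrix.transpose_nonsing_inv, hMt]
  set W := V * M⁻¹ * Vᵀ with hW
  have hWt : Wᵀ = W := by
    rw [hW, Matrix.transpose_mul, Matrix.transpose_mul, hMinvt, Matrix.transpose_transpose,
      Matrix.mul_assoc]
  -- W is PSD
  have hMpsd : M.PosSemidef := by
    have := hJ.conjTranspose_mul_mul_same V
    simpa [Matrix.conjTranspose_eq_transpose_of_trivial] using this
  have hMinvpsd : (M⁻¹).PosSemidef := by
    have h' := hMpsd.conjTranspose_mul_mul_same M⁻¹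
    have heq : (M⁻¹)ᴴ * M * M⁻¹ = M⁻¹ := by
      rw [Matrix.conjTranspose_eq_transpose_of_trivial, hMinvt, Matrix.mul_assoc,
        Matrix.mul_nonsing_inv _ hdet, Matrix.mul_one]
    rwa [heq] at h'
  have hWpsd : W.PosSemidef := by
    have := hMinvpsd.conjTranspose_mul_mul_same Vᵀ
    simpa [Matrix.conjTranspose_eq_transpose_of_trivial, hW, Matrix.mul_assoc] using this
  -- square root of J
  set S := CFC.sqrt J with hSdef
  have hSpsd : S.PosSemidef := (CFC.sqrt_nonneg J).posSemidef
  have hSt : Sᵀ = S := hSpsd.1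
  have hS : S * S = J := CFC.sqrt_mul_sqrt_self J hJ.nonneg
  -- key identity : J * W * J = J
  have hJWJ : J * W * J = J := by
    set B := S * V with hB
    have hBtB : Bᵀ * B = M := by
      rw [hB, Matrix.transpose_mul, hSt, hM]
      calc Vᵀ * S * (S * V) = Vᵀ * (S * S) * V := by simp only [Matrix.mul_assoc]
      _ = Vᵀ * J * V := by rw [hS]
    have hrS : S.rank = r := by
      have := Matrix.rank_transpose_mul_self S
      rw [hSt, hS, hrank] at this
      exact this.symm
    have hrB : B.rank = r := by
      have h1' := Matrix.rank_transpose_mul_self B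
      rw [hBtB, Matrix.rank_of_isUnit M ((Matrix.isUnit_iff_isUnit_det M).mpr hdet)] at h1'
      simpa using h1'.symm
    have hle : LinearMap.range B.mulVecLin ≤ LinearMap.range S.mulVecLin := by
      rw [hB, Matrix.mulVecLin_mul]
      exact LinearMap.range_comp_le_range _ _
    have heq : LinearMap.range B.mulVecLin = LinearMap.range S.mulVecLin := by
      refine Submodule.eq_of_le_of_finrank_le hle ?_
      show S.rank ≤ B.rank
      rw [hrS, hrB]
    have hQB : (B * M⁻¹ * Bᵀ) * B = B := by
      have e1 : (B * M⁻¹ * Bᵀ) * B = B * (M⁻¹ * (Bᵀ * B)) := by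
        simp only [Matrix.mul_assoc]
      rw [e1, hBtB, Matrix.nonsing_inv_mul _ hdet, Matrix.mul_one]
    have hQS : (B * M⁻¹ * Bᵀ) * S = S := by
      apply mulVec_ext
      intro x
      have hx : S *ᵥ x ∈ LinearMap.range B.mulVecLin := by
        rw [heq]; exact ⟨x, rfl⟩
      obtain ⟨y, hy⟩ := hx
      have hy' : B *ᵥ y = S *ᵥ x := hy
      rw [← Matrix.mulVec_mulVec, ← hy', Matrix.mulVec_mulVec, hQB]
    have hSWS : S * W * S = B * M⁻¹ * Bᵀ := by
      rw [hW, hB, Matrix.transpose_mul, hSt]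
      simp only [Matrix.mul_assoc]
    have hSWJ : S * W * J = S := by
      calc S * W * J = S * W * (S * S) := by rw [hS]
      _ = (S * W * S) * S := by simp only [Matrix.mul_assoc]
      _ = (B * M⁻¹ * Bᵀ) * S := by rw [hSWS]
      _ = S := hQS
    calc J * W * J = (S * S) * W * J := by rw [hS]
    _ = S * (S * W * J) := by simp only [Matrix.mul_assoc]
    _ = S * S := by rw [hSWJ]
    _ = J := hS
  -- the projection J * K
  have hPP : (J * K) * (J * K) = J * K := by
    calc (J * K) * (J * K) = (J * K * J) * K := by simp only [Matrix.mul_assoc]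
    _ = J * K := by rw [h1]
  have hKJP : K * J = J * K := by
    calc K * J = (K * J)ᵀ := h4.symm
    _ = Jᵀ * Kᵀ := by rw [Matrix.transpose_mul]
    _ = J * K := by rw [hJt, hKt]
  -- trace K = trace (W * (J * K))
  have htr : K.trace = (W * (J * K)).trace := by
    calc K.trace = (K * J * K).trace := by rw [h2]
    _ = (K * (J * W * J) * K).trace := by rw [hJWJ]
    _ = ((K * J) * (W * (J * K))).trace := by simp only [Matrix.mul_assoc]
    _ = ((J * K) * (W * (J * K))).trace := by rw [hKJP]
    _ = ((W * (J * K)) * (J * K)).trace := Matrix.trace_mul_comm _ _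
    _ = (W * ((J * K) * (J * K))).trace := by simp only [Matrix.mul_assoc]
    _ = (W * (J * K)).trace := by rw [hPP]
  -- final inequality
  have hproj : (1 - J * K) * (1 - J * K) = 1 - J * K := by
    rw [Matrix.sub_mul, Matrix.mul_sub, Matrix.mul_sub, hPP]
    simp
  have hpsd2 : ((1 - J * K) * W * (1 - J * K)).PosSemidef := by
    have := hWpsd.conjTranspose_mul_mul_same (1 - J * K)
    have ht : (1 - J * K)ᴴ = 1 - J * K := by
      rw [Matrix.conjTranspose_eq_transpose_of_trivial, Matrix.transpose_sub, h3,
        Matrix.transpose_one]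
    rwa [ht] at this
  have htr2 : ((1 - J * K) * W * (1 - J * K)).trace = W.trace - (W * (J * K)).trace := by
    calc ((1 - J * K) * W * (1 - J * K)).trace
        = ((1 - J * K) * ((1 - J * K) * W)).trace := Matrix.trace_mul_comm _ _
    _ = (((1 - J * K) * (1 - J * K)) * W).trace := by rw [← Matrix.mul_assoc]
    _ = ((1 - J * K) * W).trace := by rw [hproj]
    _ = (W * (1 - J * K)).trace := Matrix.trace_mul_comm _ _
    _ = W.trace - (W * (J * K)).trace := by
        rw [Matrix.mul_sub, Matrix.mul_one, Matrix.trace_sub]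
  have hfin := trace_nonneg_of_psd hpsd2
  rw [htr2] at hfin
  show K.trace ≤ W.trace
  rw [htr]
  linarith
end

section
/- Let J ∈ ℝ^{n×n} be symmetric PSD of rank r and V ∈ ℝ^{n×r} with orthonormal columns such that Vᵀ J V is invertible. Then trace(V(VᵀJV)⁻¹Vᵀ) = trace((VᵀJV)⁻¹) = Σ_{k=1}^{r} 1/λ_k(VᵀJV), and this is minimized over all such V exactly when λ_k(VᵀJV) = λ_k(J) for all k ≤ r, which occurs when range(V) equals the column space of J. -/
open Matrix

section helpers
variable {m l : ℕ}

/-- orthonormal family w.r.t. dot product -/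
def DotON {l m : ℕ} (u : Fin l → Fin m → ℝ) : Prop :=
  ∀ i j, u i ⬝ᵥ u j = if i = j then 1 else 0

lemma sum_dotProduct' {ι : Type*} [Fintype ι] (f : ι → Fin m → ℝ) (v : Fin m → ℝ) :
    (∑ i, f i) ⬝ᵥ v = ∑ i, f i ⬝ᵥ v := by
  simp only [dotProduct, Finset.sum_apply, Finset.sum_mul]
  exact Finset.sum_comm

lemma dotProduct_sum' {ι : Type*} [Fintype ι] (v : Fin m → ℝ) (f : ι → Fin m → ℝ) :
    v ⬝ᵥ (∑ i, f i) = ∑ i, v ⬝ᵥ f i := by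
  simp only [dotProduct, Finset.sum_apply, Finset.mul_sum]
  exact Finset.sum_comm

lemma mulVec_sum' {p q : ℕ} {ι : Type*} [Fintype ι] (A : Matrix (Fin p) (Fin q) ℝ) (f : ι → Fin q → ℝ) :
    A *ᵥ (∑ i, f i) = ∑ i, A *ᵥ f i := by
  simpa only [mulVecLin_apply] using map_sum A.mulVecLin f Finset.univ

lemma dot_sum_sum {u : Fin l → Fin m → ℝ} (hu : DotON u) (c d : Fin l → ℝ) :
    (∑ i, c i • u i) ⬝ᵥ (∑ j, d j • u j) = ∑ i, c i * d i := by
  rw [sum_dotProduct']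
  have : ∀ i, (c i • u i) ⬝ᵥ (∑ j, d j • u j) = c i * d i := by
    intro i
    rw [dotProduct_sum']
    have : ∀ j, (c i • u i) ⬝ᵥ (d j • u j) = c i * d j * (if i = j then 1 else 0) := by
      intro j
      rw [smul_dotProduct, dotProduct_smul, hu i j, smul_eq_mul, smul_eq_mul]
      ring
    simp only [this, mul_ite, mul_one, mul_zero, Finset.sum_ite_eq, Finset.mem_univ, if_true]
  simp only [this]

lemma qf_eval (A : Matrix (Fin m) (Fin m) ℝ) {u : Fin l → Fin m → ℝ}
    (hu : DotON u) {ν : Fin l → ℝ} (hν : ∀ i, A *ᵥ u i = ν i • u i) (d : Fin l → ℝ) :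
    (∑ i, d i • u i) ⬝ᵥ (A *ᵥ ∑ i, d i • u i) = ∑ i, ν i * d i ^ 2 := by
  have hAx : A *ᵥ (∑ i, d i • u i) = ∑ i, (d i * ν i) • u i := by
    rw [mulVec_sum']
    congr 1; funext i
    rw [mulVec_smul, hν i, smul_smul]
  rw [hAx, dot_sum_sum hu]
  congr 1; funext i; ring

lemma dotON_pos {u : Fin l → Fin m → ℝ} (hu : DotON u) {d : Fin l → ℝ}
    (hx : (∑ i, d i • u i) ≠ 0) : 0 < ∑ i, d i ^ 2 := by
  rcases lt_or_eq_of_le (Finset.sum_nonneg (fun i _ => sq_nonneg (d i))) with h | h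
  · exact h
  · exfalso
    apply hx
    have hd : ∀ i ∈ Finset.univ, d i ^ 2 = 0 :=
      (Finset.sum_eq_zero_iff_of_nonneg (fun i _ => sq_nonneg (d i))).1 h.symm
    have : ∀ i, d i = 0 := fun i => pow_eq_zero_iff (n := 2) (by norm_num) |>.1 (hd i (Finset.mem_univ i))
    simp [this]
end helpers

section sorted
variable {m : ℕ} {A : Matrix (Fin m) (Fin m) ℝ} (hA : A.IsHermitian)

/-- sorted (descending) eigenvector family as plain vectors -/
noncomputable def sw (hA : A.IsHermitian) : Fin m → Fin m → ℝ :=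
  fun i => ⇑(hA.eigenvectorBasis (Tuple.sort hA.eigenvalues i.rev))

lemma sw_eig (i : Fin m) : A *ᵥ sw hA i = eigDesc hA i • sw hA i :=
  hA.mulVec_eigenvectorBasis _

lemma sw_dotON : DotON (sw hA) := by
  intro i j
  have h := hA.eigenvectorBasis.orthonormal
  rw [orthonormal_iff_ite] at h
  have h2 := h (Tuple.sort hA.eigenvalues i.rev) (Tuple.sort hA.eigenvalues j.rev)
  rw [PiLp.inner_apply] at h2
  simp only [RCLike.inner_apply, starRingEnd_apply, star_trivial] at h2
  have : sw hA i ⬝ᵥ sw hA j = if Tuple.sort hA.eigenvalues i.rev = Tuple.sort hA.eigenvalues j.rev then 1 else 0 := by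
    rw [← h2]; unfold dotProduct; exact Finset.sum_congr rfl (fun x _ => mul_comm _ _)
  rw [this]
  congr 1
  simp [EmbeddingLike.apply_eq_iff_eq, Fin.rev_inj]

lemma eigDesc_antitone : Antitone (eigDesc hA) := by
  intro i j hij
  exact Tuple.monotone_sort hA.eigenvalues (Fin.rev_le_rev.2 hij)

end sorted

section li
variable {m l : ℕ}

lemma DotON.linearIndependent {u : Fin l → Fin m → ℝ} (hu : DotON u) :
    LinearIndependent ℝ u := by
  rw [Fintype.linearIndependent_iff]
  intro g hg i
  have h1 : (∑ j, g j • u j) ⬝ᵥ u i = g i := by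
    rw [sum_dotProduct']
    have : ∀ j, (g j • u j) ⬝ᵥ u i = g j * (if j = i then 1 else 0) := by
      intro j; rw [smul_dotProduct, hu j i, smul_eq_mul]
    simp only [this, mul_ite, mul_one, mul_zero, Finset.sum_ite_eq', Finset.mem_univ, if_true]
  rw [hg, zero_dotProduct] at h1
  exact h1.symm

lemma DotON.finrank_span {u : Fin l → Fin m → ℝ} (hu : DotON u) :
    Module.finrank ℝ (Submodule.span ℝ (Set.range u)) = l := by
  rw [finrank_span_eq_card hu.linearIndependent, Fintype.card_fin]

lemma exists_ne_zero_mem_inf {S T : Submodule ℝ (Fin m → ℝ)}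
    (h : m < Module.finrank ℝ S + Module.finrank ℝ T) :
    ∃ x, x ∈ S ∧ x ∈ T ∧ x ≠ 0 := by
  have h1 := Submodule.finrank_sup_add_finrank_inf_eq S T
  have h2 : Module.finrank ℝ ↥(S ⊔ T) ≤ m := by
    have h3 := Submodule.finrank_le (S ⊔ T)
    rwa [Module.finrank_fin_fun] at h3
  have h3 : 0 < Module.finrank ℝ ↥(S ⊓ T) := by omega
  have : Nontrivial ↥(S ⊓ T) := Module.finrank_pos_iff.1 h3
  obtain ⟨x, hx⟩ := exists_ne (0 : ↥(S ⊓ T))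
  exact ⟨x.1, x.2.1, x.2.2, by simpa using hx⟩

end li

section cf
variable {m : ℕ}

/-- Any `(k+1)`-dimensional subspace spanned by an orthonormal family contains a nonzero
vector whose Rayleigh quotient is at most the `k`-th largest eigenvalue. -/
lemma exists_low {A : Matrix (Fin m) (Fin m) ℝ} (hA : A.IsHermitian) {l : ℕ}
    (u : Fin l → Fin m → ℝ) (hu : DotON u) (k : ℕ) (hk : k < m) (hl : k < l) :
    ∃ d : Fin l → ℝ, (∑ i, d i • u i) ≠ 0 ∧
      (∑ i, d i • u i) ⬝ᵥ (A *ᵥ (∑ i, d i • u i)) ≤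
        eigDesc hA ⟨k, hk⟩ * ((∑ i, d i • u i) ⬝ᵥ (∑ i, d i • u i)) := by
  -- the "low" eigenvector family
  set g : Fin (m - k) → Fin m := fun j => ⟨k + j, by omega⟩ with hg
  have hginj : Function.Injective g := by
    intro a b hab
    simpa [hg, Fin.ext_iff] using hab
  set w : Fin (m - k) → Fin m → ℝ := sw hA ∘ g with hw
  have hwON : DotON w := by
    intro i j
    rw [hw]
    simp only [Function.comp_apply]
    rw [sw_dotON hA (g i) (g j)]
    congr 1
    simp [hginj.eq_iff]
  -- dimension count
  obtain ⟨x, hxS, hxT, hx0⟩ := exists_ne_zero_mem_inf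
    (S := Submodule.span ℝ (Set.range u)) (T := Submodule.span ℝ (Set.range w))
    (by rw [hu.finrank_span, hwON.finrank_span]; omega)
  obtain ⟨d, hd⟩ := (Submodule.mem_span_range_iff_exists_fun ℝ).1 hxS
  obtain ⟨c, hc⟩ := (Submodule.mem_span_range_iff_exists_fun ℝ).1 hxT
  refine ⟨d, by rwa [hd], ?_⟩
  rw [hd, ← hc]
  have hνw : ∀ j, A *ᵥ w j = eigDesc hA (g j) • w j := fun j => sw_eig hA (g j)
  rw [qf_eval A hwON hνw c, dot_sum_sum hwON c c]
  have hle : ∀ j, eigDesc hA (g j) * c j ^ 2 ≤ eigDesc hA ⟨k, hk⟩ * c j ^ 2 := by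
    intro j
    have : eigDesc hA (g j) ≤ eigDesc hA ⟨k, hk⟩ :=
      eigDesc_antitone hA (by simp [hg, Fin.le_def])
    nlinarith [sq_nonneg (c j)]
  calc ∑ j, eigDesc hA (g j) * c j ^ 2 ≤ ∑ j, eigDesc hA ⟨k, hk⟩ * c j ^ 2 :=
        Finset.sum_le_sum (fun j _ => hle j)
    _ = eigDesc hA ⟨k, hk⟩ * ∑ j, c j * c j := by
        rw [Finset.mul_sum]; congr 1; funext j; ring

/-- If `A` has an orthonormal family of `l > k` eigenvectors with eigenvalues all `≥ c`,
then the `k`-th largest eigenvalue of `A` is `≥ c`. -/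
lemma le_eigDesc {A : Matrix (Fin m) (Fin m) ℝ} (hA : A.IsHermitian) {l : ℕ}
    (u : Fin l → Fin m → ℝ) (hu : DotON u) (ν : Fin l → ℝ)
    (hν : ∀ i, A *ᵥ u i = ν i • u i) (c : ℝ) (hc : ∀ i, c ≤ ν i)
    (k : ℕ) (hk : k < m) (hl : k < l) : c ≤ eigDesc hA ⟨k, hk⟩ := by
  obtain ⟨d, hd0, hdle⟩ := exists_low hA u hu k hk hl
  rw [qf_eval A hu hν d, dot_sum_sum hu d d] at hdle
  have hpos : 0 < ∑ i, d i ^ 2 := dotON_pos hu hd0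
  have h1 : c * ∑ i, d i ^ 2 ≤ ∑ i, ν i * d i ^ 2 := by
    rw [Finset.mul_sum]
    exact Finset.sum_le_sum (fun i _ => by nlinarith [sq_nonneg (d i), hc i])
  have h2 : (∑ i, d i * d i) = ∑ i, d i ^ 2 := by congr 1; funext i; ring
  rw [h2] at hdle
  have := le_trans h1 hdle
  exact le_of_mul_le_mul_right (by linarith) hpos

end cf

section conj
variable {n r : ℕ}

lemma mulVec_dot (V : Matrix (Fin n) (Fin r) ℝ) (x : Fin r → ℝ) (z : Fin n → ℝ) :
    (V *ᵥ x) ⬝ᵥ z = x ⬝ᵥ (Vᵀ *ᵥ z) := by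
  rw [dotProduct_comm, dotProduct_mulVec, ← mulVec_transpose, dotProduct_comm]

lemma dot_conj (V : Matrix (Fin n) (Fin r) ℝ) (B : Matrix (Fin n) (Fin n) ℝ)
    (x y : Fin r → ℝ) :
    (V *ᵥ x) ⬝ᵥ (B *ᵥ (V *ᵥ y)) = x ⬝ᵥ ((Vᵀ * B * V) *ᵥ y) := by
  rw [mulVec_dot, mulVec_mulVec, mulVec_mulVec, Matrix.mul_assoc]

lemma dot_isometry {V : Matrix (Fin n) (Fin r) ℝ} (hV : Vᵀ * V = 1) (x y : Fin r → ℝ) :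
    (V *ᵥ x) ⬝ᵥ (V *ᵥ y) = x ⬝ᵥ y := by
  rw [mulVec_dot, mulVec_mulVec, hV, one_mulVec]

/-- Cauchy interlacing (upper half): the k-th largest eigenvalue of a compression
`Vᵀ A V` is at most the k-th largest eigenvalue of `A`. -/
lemma interlace {A : Matrix (Fin n) (Fin n) ℝ} (hA : A.IsHermitian)
    {V : Matrix (Fin n) (Fin r) ℝ} (hV : Vᵀ * V = 1)
    (hB : (Vᵀ * A * V).IsHermitian) (k : ℕ) (hkr : k < r) (hkn : k < n) :
    eigDesc hB ⟨k, hkr⟩ ≤ eigDesc hA ⟨k, hkn⟩ := by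
  have hk1 : k + 1 ≤ r := hkr
  set b : Fin (k + 1) → Fin r → ℝ := fun i => sw hB (Fin.castLE hk1 i) with hb
  have hbON : DotON b := by
    intro i j
    rw [hb]
    simp only
    rw [sw_dotON hB (Fin.castLE hk1 i) (Fin.castLE hk1 j)]
    congr 1
    simp [Fin.ext_iff]
  have hbeig : ∀ i, (Vᵀ * A * V) *ᵥ b i = eigDesc hB (Fin.castLE hk1 i) • b i :=
    fun i => sw_eig hB _
  set u : Fin (k + 1) → Fin n → ℝ := fun i => V *ᵥ b i with hup
  have huON : DotON u := by
    intro i j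
    rw [hup]
    simp only
    rw [dot_isometry hV, hbON i j]
  obtain ⟨d, hd0, hdle⟩ := exists_low hA u huON k hkn (Nat.lt_succ_self k)
  set y : Fin r → ℝ := ∑ i, d i • b i with hy
  have hxy : (∑ i, d i • u i) = V *ᵥ y := by
    rw [hy, mulVec_sum']
    congr 1; funext i
    rw [mulVec_smul]
  rw [hxy] at hd0 hdle
  rw [dot_conj, dot_isometry hV] at hdle
  rw [hy] at hdle
  rw [qf_eval _ hbON hbeig d, dot_sum_sum hbON d d] at hdle
  have hy0 : y ≠ 0 := by
    intro h
    apply hd0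
    rw [hy] at h ⊢
    rw [h, mulVec_zero]
  have hpos : 0 < ∑ i, d i ^ 2 := dotON_pos hbON (hy ▸ hy0)
  have hge : eigDesc hB ⟨k, hkr⟩ * ∑ i, d i ^ 2 ≤ ∑ i, eigDesc hB (Fin.castLE hk1 i) * d i ^ 2 := by
    rw [Finset.mul_sum]
    refine Finset.sum_le_sum (fun i _ => ?_)
    have : eigDesc hB ⟨k, hkr⟩ ≤ eigDesc hB (Fin.castLE hk1 i) :=
      eigDesc_antitone hB (by simp [Fin.le_def]; omega)
    nlinarith [sq_nonneg (d i)]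
  have hdd : (∑ i, d i * d i) = ∑ i, d i ^ 2 := by congr 1; funext i; ring
  rw [hdd] at hdle
  have := le_trans hge hdle
  exact le_of_mul_le_mul_right this hpos
end conj

section tracebit
variable {m : ℕ} {M : Matrix (Fin m) (Fin m) ℝ}

lemma trace_inv_eq (hM : M.IsHermitian) (hd : M.det ≠ 0) :
    M⁻¹.trace = ∑ i, (hM.eigenvalues i)⁻¹ := by
  have heig : ∀ i, hM.eigenvalues i ≠ 0 := by
    intro i hi
    apply hd
    rw [hM.det_eq_prod_eigenvalues]
    exact Finset.prod_eq_zero (Finset.mem_univ i) (by simpa using hi)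
  set U : Matrix (Fin m) (Fin m) ℝ := (hM.eigenvectorUnitary : Matrix (Fin m) (Fin m) ℝ) with hU
  have hU1 : U * star U = 1 := (Matrix.mem_unitaryGroup_iff).mp hM.eigenvectorUnitary.2
  have hU2 : star U * U = 1 := (Matrix.mem_unitaryGroup_iff').mp hM.eigenvectorUnitary.2
  have hspec : M = U * diagonal hM.eigenvalues * star U := by
    have := hM.spectral_theorem
    simpa [Function.comp] using this
  set C : Matrix (Fin m) (Fin m) ℝ := U * diagonal (fun i => (hM.eigenvalues i)⁻¹) * star U with hC
  have hMC : M * C = 1 := by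
    rw [hspec, hC]
    calc U * diagonal hM.eigenvalues * star U * (U * diagonal (fun i => (hM.eigenvalues i)⁻¹) * star U)
        = U * diagonal hM.eigenvalues * (star U * U) * diagonal (fun i => (hM.eigenvalues i)⁻¹) * star U := by
          noncomm_ring
      _ = U * (diagonal hM.eigenvalues * diagonal (fun i => (hM.eigenvalues i)⁻¹)) * star U := by
          rw [hU2]; noncomm_ring
      _ = 1 := by
          rw [diagonal_mul_diagonal]
          have : (fun i => hM.eigenvalues i * (hM.eigenvalues i)⁻¹) = fun _ => (1:ℝ) := by
            funext i; exact mul_inv_cancel₀ (heig i)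
          rw [this, diagonal_one, Matrix.mul_one, hU1]
  have hinv : M⁻¹ = C := Matrix.inv_eq_right_inv hMC
  rw [hinv, hC, Matrix.trace_mul_cycle, hU2, Matrix.one_mul, trace_diagonal]

lemma sum_eigDesc_inv (hM : M.IsHermitian) :
    ∑ k, (eigDesc hM k)⁻¹ = ∑ i, (hM.eigenvalues i)⁻¹ := by
  exact Equiv.sum_comp (Fin.revPerm.trans (Tuple.sort hM.eigenvalues)) (fun i => (hM.eigenvalues i)⁻¹)

lemma eigDesc_nonneg (hM : M.PosSemidef) (k : Fin m) : 0 ≤ eigDesc hM.1 k :=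
  hM.eigenvalues_nonneg _

lemma eigDesc_pos_of_det (hM : M.PosSemidef) (hd : M.det ≠ 0) (k : Fin m) :
    0 < eigDesc hM.1 k := by
  rcases lt_or_eq_of_le (eigDesc_nonneg hM k) with h | h
  · exact h
  · exfalso
    apply hd
    rw [hM.1.det_eq_prod_eigenvalues]
    exact Finset.prod_eq_zero (Finset.mem_univ (Tuple.sort hM.1.eigenvalues k.rev)) (by simpa [eigDesc] using h.symm)

lemma eigDesc_pos_of_lt_rank {J : Matrix (Fin m) (Fin m) ℝ} (hJ : J.PosSemidef) {r : ℕ}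
    (hrank : J.rank = r) {k : ℕ} (hk : k < r) (hkn : k < m) :
    0 < eigDesc hJ.1 ⟨k, hkn⟩ := by
  classical
  rcases lt_or_eq_of_le (eigDesc_nonneg hJ ⟨k, hkn⟩) with h | h
  · exact h
  exfalso
  have h0 : eigDesc hJ.1 ⟨k, hkn⟩ = 0 := h.symm
  have hr : r = Fintype.card {i // hJ.1.eigenvalues i ≠ 0} := by
    rw [← hrank]; exact hJ.1.rank_eq_card_non_zero_eigs
  let e : Fin m ≃ Fin m := Fin.revPerm.trans (Tuple.sort hJ.1.eigenvalues)
  have hcard : Fintype.card {i // hJ.1.eigenvalues i ≠ 0} =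
      Fintype.card {i // eigDesc hJ.1 i ≠ 0} :=
    (Fintype.card_congr (Equiv.subtypeEquiv e (fun i => Iff.rfl))).symm
  have hsmall : ∀ i : Fin m, eigDesc hJ.1 i ≠ 0 → (i : ℕ) < k := by
    intro i hi
    by_contra hik
    push_neg at hik
    apply hi
    refine le_antisymm ?_ (eigDesc_nonneg hJ i)
    exact (eigDesc_antitone hJ.1 (by simpa [Fin.le_def] using hik)).trans (le_of_eq h0)
  have hinj : Fintype.card {i : Fin m // eigDesc hJ.1 i ≠ 0} ≤
      Fintype.card {j : Fin m // (j : ℕ) < k} :=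
    Fintype.card_le_of_injective (fun i => ⟨i.1, hsmall i.1 i.2⟩)
      (fun a b hab => Subtype.ext (by simpa using congrArg Subtype.val hab))
  have hck : Fintype.card {j : Fin m // (j : ℕ) < k} = k := by
    have : {j : Fin m // (j : ℕ) < k} ≃ Fin k :=
      { toFun := fun j => ⟨j.1, j.2⟩
        invFun := fun j => ⟨⟨j.1, lt_trans j.2 hkn⟩, j.2⟩
        left_inv := fun j => by ext; rfl
        right_inv := fun j => by ext; rfl }
    rw [Fintype.card_congr this, Fintype.card_fin]
  omega

end tracebit

section range5
variable {n r : ℕ}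

lemma range_eig_ge (hrn : r ≤ n) {J : Matrix (Fin n) (Fin n) ℝ} (hJ : J.PosSemidef)
    (hrank : J.rank = r) {V : Matrix (Fin n) (Fin r) ℝ} (hV : Vᵀ * V = 1)
    (hVJV : (Vᵀ * J * V).IsHermitian)
    (hr : LinearMap.range V.mulVecLin = LinearMap.range J.mulVecLin)
    (k : Fin r) : eigDesc hJ.1 ⟨k, lt_of_lt_of_le k.isLt hrn⟩ ≤ eigDesc hVJV k := by
  have hP : ∀ y, y ∈ LinearMap.range J.mulVecLin → V *ᵥ (Vᵀ *ᵥ y) = y := by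
    rw [← hr]
    rintro y ⟨x, rfl⟩
    rw [mulVecLin_apply, mulVec_mulVec, mulVec_mulVec, Matrix.mul_assoc, hV, Matrix.mul_one]
  have hkn : (k : ℕ) < n := lt_of_lt_of_le k.isLt hrn
  set cast : Fin ((k : ℕ) + 1) → Fin n := fun i => ⟨i.1, by omega⟩ with hcast
  set w : Fin ((k : ℕ) + 1) → Fin n → ℝ := fun i => sw hJ.1 (cast i) with hw
  set μ : Fin ((k : ℕ) + 1) → ℝ := fun i => eigDesc hJ.1 (cast i) with hμ
  have hμpos : ∀ i, 0 < μ i := by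
    intro i
    exact eigDesc_pos_of_lt_rank hJ hrank (by have := i.isLt; have := k.isLt; omega) _
  have hweig : ∀ i, J *ᵥ w i = μ i • w i := fun i => sw_eig hJ.1 (cast i)
  have hwmem : ∀ i, w i ∈ LinearMap.range J.mulVecLin := by
    intro i
    refine ⟨(μ i)⁻¹ • w i, ?_⟩
    rw [mulVecLin_apply, mulVec_smul, hweig i, smul_smul, inv_mul_cancel₀ (hμpos i).ne', one_smul]
  have hPw : ∀ i, V *ᵥ (Vᵀ *ᵥ w i) = w i := fun i => hP (w i) (hwmem i)
  set u : Fin ((k : ℕ) + 1) → Fin r → ℝ := fun i => Vᵀ *ᵥ w i with hu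
  have huON : DotON u := by
    intro i j
    rw [hu]
    simp only
    rw [mulVec_dot Vᵀ (w i) (Vᵀ *ᵥ w j), transpose_transpose, hPw j]
    rw [sw_dotON hJ.1 (cast i) (cast j)]
    congr 1
    simp [hcast, Fin.ext_iff]
  have hueig : ∀ i, (Vᵀ * J * V) *ᵥ u i = μ i • u i := by
    intro i
    rw [hu]
    simp only
    rw [← mulVec_mulVec, ← mulVec_mulVec, hPw i, hweig i, mulVec_smul]
  have hkr : (k : ℕ) < r := k.isLt
  have := le_eigDesc hVJV u huON μ hueig (eigDesc hJ.1 ⟨k, hkn⟩)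
    (fun i => eigDesc_antitone hJ.1 (by simp [hcast, Fin.le_def]; omega)) k hkr (Nat.lt_succ_self _)
  simpa using this
end range5
theorem stmt17 {n r : ℕ} (hrn : r ≤ n)
    (J : Matrix (Fin n) (Fin n) ℝ) (hJ : J.PosSemidef) (hrank : J.rank = r)
    (V : Matrix (Fin n) (Fin r) ℝ) (hV : Vᵀ * V = 1)
    (hdet : IsUnit (Vᵀ * J * V).det) (hVJV : (Vᵀ * J * V).IsHermitian) :
    (V * (Vᵀ * J * V)⁻¹ * Vᵀ).trace = ((Vᵀ * J * V)⁻¹).trace ∧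
    ((Vᵀ * J * V)⁻¹).trace = ∑ k : Fin r, (eigDesc hVJV k)⁻¹ ∧
    (∑ k : Fin r, (eigDesc hJ.1 ⟨k, lt_of_lt_of_le k.isLt hrn⟩)⁻¹) ≤
      (V * (Vᵀ * J * V)⁻¹ * Vᵀ).trace ∧
    ((V * (Vᵀ * J * V)⁻¹ * Vᵀ).trace =
        ∑ k : Fin r, (eigDesc hJ.1 ⟨k, lt_of_lt_of_le k.isLt hrn⟩)⁻¹ ↔
      ∀ k : Fin r, eigDesc hVJV k = eigDesc hJ.1 ⟨k, lt_of_lt_of_le k.isLt hrn⟩) ∧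
    (LinearMap.range V.mulVecLin = LinearMap.range J.mulVecLin →
      ∀ k : Fin r, eigDesc hVJV k = eigDesc hJ.1 ⟨k, lt_of_lt_of_le k.isLt hrn⟩) := by
  have hdet' : (Vᵀ * J * V).det ≠ 0 := hdet.ne_zero
  have hMpsd : (Vᵀ * J * V).PosSemidef := by
    have := hJ.conjTranspose_mul_mul_same V
    simpa using this
  -- part 1
  have h1 : (V * (Vᵀ * J * V)⁻¹ * Vᵀ).trace = ((Vᵀ * J * V)⁻¹).trace := by
    rw [Matrix.trace_mul_cycle, hV, Matrix.one_mul]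
  -- part 2
  have h2 : ((Vᵀ * J * V)⁻¹).trace = ∑ k : Fin r, (eigDesc hVJV k)⁻¹ := by
    rw [trace_inv_eq hVJV hdet', ← sum_eigDesc_inv hVJV]
  -- termwise facts
  have hMpos : ∀ k : Fin r, 0 < eigDesc hVJV k := fun k => eigDesc_pos_of_det hMpsd hdet' k
  have hint : ∀ k : Fin r, eigDesc hVJV k ≤ eigDesc hJ.1 ⟨k, lt_of_lt_of_le k.isLt hrn⟩ := by
    intro k
    have := interlace hJ.1 hV hVJV k k.isLt (lt_of_lt_of_le k.isLt hrn)
    simpa using this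
  have hterm : ∀ k : Fin r,
      (eigDesc hJ.1 ⟨k, lt_of_lt_of_le k.isLt hrn⟩)⁻¹ ≤ (eigDesc hVJV k)⁻¹ := by
    intro k
    exact inv_anti₀ (hMpos k) (hint k)
  -- part 3
  have h3 : (∑ k : Fin r, (eigDesc hJ.1 ⟨k, lt_of_lt_of_le k.isLt hrn⟩)⁻¹) ≤
      (V * (Vᵀ * J * V)⁻¹ * Vᵀ).trace := by
    rw [h1, h2]
    exact Finset.sum_le_sum (fun k _ => hterm k)
  refine ⟨h1, h2, h3, ?_, ?_⟩
  · constructor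
    · intro h
      have hsum : (∑ k : Fin r, (eigDesc hJ.1 ⟨k, lt_of_lt_of_le k.isLt hrn⟩)⁻¹) =
          ∑ k : Fin r, (eigDesc hVJV k)⁻¹ := by rw [← h, h1, h2]
      have := (Finset.sum_eq_sum_iff_of_le (fun k _ => hterm k)).1 hsum
      intro k
      have hk := this k (Finset.mem_univ k)
      exact (inv_injective hk).symm
    · intro h
      rw [h1, h2]
      exact Finset.sum_congr rfl (fun k _ => by rw [h k])
  · intro hr k
    exact le_antisymm (hint k) (range_eig_ge hrn hJ hrank hV hVJV hr k)
end
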